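/- Let K be a field. Every function f : Σ* → K computed by a finite-state weighted automaton over K is weakly guessable and weakly co-guessable, and hence strongly guessable and strongly co-guessable. -/

import Mathlib

open scoped Classical

namespace LearnWA

variable {σ S : Type}

section Hankel

variable [Semiring S]

/-- The row of the Hankel matrix of `f` indexed by `v`: `⟨v⟩_w = f (v ++ w)`. -/
def row (f : List σ → S) (v : List σ) : List σ → S := fun w => f (v ++ w)

/-- The column of the Hankel matrix of `f` indexed by `v`: `[v]_w = f (w ++ v)`. -/
def col (f : List σ → S) (v : List σ) : List σ → S := fun w => f (w ++ v)

/-- The right shift `x · u`, given by `(x · u)_w = x (u ++ w)`. -/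
def shiftR (x : List σ → S) (u : List σ) : List σ → S := fun w => x (u ++ w)

/-- The left shift `u · x`, given by `(u · x)_w = x (w ++ u)`. -/
def shiftL (x : List σ → S) (u : List σ) : List σ → S := fun w => x (w ++ u)

/-- `x` is a finite left-linear combination of elements of `X`. -/
def LeftGenerated (X : Set (List σ → S)) (x : List σ → S) : Prop :=
  ∃ (F : Finset (List σ → S)) (c : (List σ → S) → S),
    ↑F ⊆ X ∧ ∀ w, x w = ∑ y ∈ F, c y * y w

/-- `x` is a finite right-linear combination of elements of `X`. -/
def RightGenerated (X : Set (List σ → S)) (x : List σ → S) : Prop :=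
  ∃ (F : Finset (List σ → S)) (c : (List σ → S) → S),
    ↑F ⊆ X ∧ ∀ w, x w = ∑ y ∈ F, y w * c y

def LeftClosed (X : Set (List σ → S)) : Prop :=
  ∀ x ∈ X, ∀ a : σ, LeftGenerated X (shiftR x [a])

def RightClosed (X : Set (List σ → S)) : Prop :=
  ∀ x ∈ X, ∀ a : σ, RightGenerated X (shiftL x [a])

/-- every row of the Hankel matrix of `f` is left-generated by `X`. -/
def RowGenerating (f : List σ → S) (X : Set (List σ → S)) : Prop :=
  ∀ v : List σ, LeftGenerated X (row f v)

/-- every column of the Hankel matrix of `f` is right-generated by `X`. -/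
def ColGenerating (f : List σ → S) (X : Set (List σ → S)) : Prop :=
  ∀ v : List σ, RightGenerated X (col f v)

/-- The left solution set `Λ_{Q,T}`. -/
def Lambda (f : List σ → S) (Q : Finset (List σ → S)) (T : Set (List σ)) :
    Set ((Q → S) × (Q → σ → Q → S)) :=
  { lam |
    (∀ t ∈ T, f t = ∑ q : Q, lam.1 q * (q : List σ → S) t) ∧
    ∀ (q : Q) (a : σ), ∀ t ∈ T,
      (q : List σ → S) (a :: t) = ∑ p : Q, lam.2 q a p * (p : List σ → S) t }

/-- `Λ_{W,T}` for a finite set of words `W`: `Λ_{Q,T}` with `Q = {⟨w⟩ : w ∈ W}`. -/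
noncomputable def LambdaW (f : List σ → S) (W : Finset (List σ)) (T : Set (List σ)) :=
  Lambda f (W.image (row f)) T

/-- The right solution set `Γ_{Q,T}` (here `T` is the finite set of vectors,
`Q ⊆ Σ*` the restriction set). -/
def Gamma (f : List σ → S) (T : Finset (List σ → S)) (Q : Set (List σ)) :
    Set ((T → S) × (T → σ → T → S)) :=
  { gam |
    (∀ u ∈ Q, f u = ∑ t : T, (t : List σ → S) u * gam.1 t) ∧
    ∀ (t : T) (a : σ), ∀ u ∈ Q,
      (t : List σ → S) (u ++ [a]) = ∑ s : T, (s : List σ → S) u * gam.2 s a t }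

/-- `Γ_{Q,W}` for a finite set of words `W`: `Γ_{Q,T}` with `T = {[w] : w ∈ W}`. -/
noncomputable def GammaW (f : List σ → S) (W : Finset (List σ)) (Q : Set (List σ)) :=
  Gamma f (W.image (col f)) Q

/-- `f` is weakly guessable: there is a finite (nonempty) set `Q` of rows of its Hankel
matrix with `Λ_Q ≠ ∅`. -/
def WeaklyGuessable (f : List σ → S) : Prop :=
  ∃ Q : Finset (List σ → S), Q.Nonempty ∧ (∀ q ∈ Q, ∃ w, q = row f w) ∧
    (Lambda f Q Set.univ).Nonempty

/-- `f` is weakly co-guessable: there is a finite (nonempty) set `T` of columns of its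
Hankel matrix with `Γ_T ≠ ∅`. -/
def WeaklyCoGuessable (f : List σ → S) : Prop :=
  ∃ T : Finset (List σ → S), T.Nonempty ∧ (∀ t ∈ T, ∃ w, t = col f w) ∧
    (Gamma f T Set.univ).Nonempty

/-- `f` is guessable: there are finite (nonempty) sets of words `Q, T` with
`Λ_{Q,T} = Λ_Q ≠ ∅`. -/
def Guessable (f : List σ → S) : Prop :=
  ∃ (Q T : Finset (List σ)), Q.Nonempty ∧ T.Nonempty ∧
    LambdaW f Q ↑T = LambdaW f Q Set.univ ∧ (LambdaW f Q Set.univ).Nonempty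

/-- `f` is co-guessable: there are finite (nonempty) sets of words `Q, T` with
`Γ_{Q,T} = Γ_T ≠ ∅`. -/
def CoGuessable (f : List σ → S) : Prop :=
  ∃ (Q T : Finset (List σ)), Q.Nonempty ∧ T.Nonempty ∧
    GammaW f T ↑Q = GammaW f T Set.univ ∧ (GammaW f T Set.univ).Nonempty

/-- `f` is strongly guessable: guessable, and for every finite (nonempty) set of words `Q`
there is a finite (nonempty) set of words `T` with `Λ_{Q,T} = Λ_Q`. -/
def StronglyGuessable (f : List σ → S) : Prop :=
  Guessable f ∧ ∀ Q : Finset (List σ), Q.Nonempty →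
    ∃ T : Finset (List σ), T.Nonempty ∧ LambdaW f Q ↑T = LambdaW f Q Set.univ

/-- `f` is strongly co-guessable. -/
def StronglyCoGuessable (f : List σ → S) : Prop :=
  CoGuessable f ∧ ∀ T : Finset (List σ), T.Nonempty →
    ∃ Q : Finset (List σ), Q.Nonempty ∧ GammaW f T ↑Q = GammaW f T Set.univ

/-- A total `Q`-chain: an infinite strictly descending chain
`Λ_{Q,T 0} ⊋ Λ_{Q,T 1} ⊋ ⋯` with `T i ⊆ T (i+1)` and every word in some `T i`. -/
def TotalQChain (f : List σ → S) (Q : Finset (List σ)) (T : ℕ → Set (List σ)) : Prop :=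
  (∀ i, T i ⊆ T (i + 1)) ∧ (∀ w : List σ, ∃ i, w ∈ T i) ∧
    ∀ i, LambdaW f Q (T (i + 1)) ⊂ LambdaW f Q (T i)

/-- `f` is row-bound: there is a finite (nonempty) set of words `Q` with `Λ_Q ≠ ∅`
and no total `Q`-chain. -/
def RowBound (f : List σ → S) : Prop :=
  ∃ Q : Finset (List σ), Q.Nonempty ∧ (LambdaW f Q Set.univ).Nonempty ∧
    ∀ T : ℕ → Set (List σ), ¬ TotalQChain f Q T

/-- `f` is strongly row-bound: for every finite (nonempty) set of words `Q` there is
no total `Q`-chain. -/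
def StronglyRowBound (f : List σ → S) : Prop :=
  ∀ Q : Finset (List σ), Q.Nonempty → ∀ T : ℕ → Set (List σ), ¬ TotalQChain f Q T

/-- `f` satisfies the weak ascending chain condition. -/
def WeakACC (f : List σ → S) : Prop :=
  ∀ X : ℕ → Submodule S (List σ → S),
    (∀ i, X i ≤ X (i + 1)) →
    (∀ i, ∃ R : Finset (List σ), X i = Submodule.span S (↑(R.image (row f)) : Set (List σ → S))) →
    (∀ v : List σ, ∃ i, row f v ∈ X i) →
    ∃ n, ∀ m ≥ n, X m = X n

end Hankel

/-- The mirror of `f`. -/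
def mirror (f : List σ → S) : List σ → S := fun w => f w.reverse

/-- A finite-state weighted automaton over the alphabet `σ` with weights in `S`. -/
structure WAuto (σ S : Type) where
  State : Type
  [instFintype : Fintype State]
  init : State → S
  trans : σ → State → State → S
  final : State → S

attribute [instance] WAuto.instFintype

variable [Semiring S]

/-- `A.run w q` is the value `(M(w) η)_q`, i.e. the value computed by `A` on `w` when
started at `q` with initial weight `1`. -/
def WAuto.run (A : WAuto σ S) : List σ → A.State → S
  | [], q => A.final q
  | a :: w, q => ∑ p : A.State, A.trans a q p * WAuto.run A w p

/-- `A` computes `f`: for every word `w`, `f w = α M(w) η`. -/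
def WAuto.Computes (A : WAuto σ S) (f : List σ → S) : Prop :=
  ∀ w : List σ, f w = ∑ q : A.State, A.init q * A.run w q

/-- The (Hankel/hypothesis) automaton `H_{Q,λ}` built from a solution `λ`. -/
def hypAut (f : List σ → S) (Q : Finset (List σ → S))
    (lam : (Q → S) × (Q → σ → Q → S)) : WAuto σ S where
  State := Q
  init := lam.1
  trans := fun a q p => lam.2 q a p
  final := fun q => (q : List σ → S) []

/-- `A.IsRun p w l`: `l` is the list of states successively visited by a run of `A`
on the word `w` starting at `p` (all transitions used have nonzero weight). -/
def WAuto.IsRun (A : WAuto σ S) : A.State → List σ → List A.State → Prop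
  | _, [], l => l = []
  | p, a :: w, l => ∃ q l', l = q :: l' ∧ A.trans a p q ≠ 0 ∧ WAuto.IsRun A q w l'

/-- all transitions along the run have weight `1`. -/
def WAuto.RunWeightsOne (A : WAuto σ S) : A.State → List σ → List A.State → Prop
  | _, [], _ => True
  | p, a :: w, l => ∃ q l', l = q :: l' ∧ A.trans a p q = 1 ∧ WAuto.RunWeightsOne A q w l'

/-- `A` is literal: it has a unique initial state with weight `1`, and there is a
prefix-closed set of words `W` and a bijection `b` from the states onto `W` such that for
every state `q` there is a unique run from the initial state labelled `b q`, every
transition of this run has weight `1`, and the run terminates at `q`. -/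
def WAuto.Literal (A : WAuto σ S) : Prop :=
  ∃ q0 : A.State, A.init q0 = 1 ∧ (∀ q, q ≠ q0 → A.init q = 0) ∧
    ∃ (W : Set (List σ)) (b : A.State → List σ),
      (∀ w ∈ W, ∀ u, u <+: w → u ∈ W) ∧
      Function.Injective b ∧ Set.range b = W ∧
      ∀ q : A.State,
        (∃! l : List A.State, A.IsRun q0 (b q) l) ∧
        ∀ l : List A.State, A.IsRun q0 (b q) l →
          A.RunWeightsOne q0 (b q) l ∧ (q0 :: l).getLast (List.cons_ne_nil _ _) = q

end LearnWA

namespace LearnWA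

section Aux

variable {σ K : Type} [Fintype σ] [Field K]

/-- Coefficient extraction from span membership (left version). -/
lemma exists_coeffs {s : Finset (List σ → K)} {x : List σ → K}
    (hx : x ∈ Submodule.span K (↑s : Set (List σ → K))) :
    ∃ c : s → K, ∀ t, x t = ∑ q : s, c q * (q : List σ → K) t := by
  obtain ⟨c, -, hc⟩ := Submodule.mem_span_finset.1 hx
  refine ⟨fun q => c q, fun t => ?_⟩
  have h := congrFun hc t
  simp only [Finset.sum_apply, Pi.smul_apply, smul_eq_mul] at h
  rw [← h, ← Finset.sum_coe_sort s (fun i => c i * i t)]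

/-- Coefficient extraction (right version). -/
lemma exists_coeffs' {s : Finset (List σ → K)} {x : List σ → K}
    (hx : x ∈ Submodule.span K (↑s : Set (List σ → K))) :
    ∃ c : s → K, ∀ t, x t = ∑ q : s, (q : List σ → K) t * c q := by
  obtain ⟨c, hc⟩ := exists_coeffs hx
  exact ⟨c, fun t => by rw [hc t]; exact Finset.sum_congr rfl fun q _ => mul_comm _ _⟩

/-- In an Artinian module, an arbitrary family of submodules indexed by words has a
finite (nonempty) subfamily with the same intersection. -/
lemma exists_finset_iInf (V : Type) [AddCommGroup V] [Module K V] [IsArtinian K V]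
    (S : List σ → Submodule K V) :
    ∃ J : Finset (List σ), J.Nonempty ∧ ∀ x : V, (∀ j ∈ J, x ∈ S j) ↔ ∀ i, x ∈ S i := by
  obtain ⟨m, hm, hmin⟩ :=
    (IsWellFounded.wf (r := (· < · : Submodule K V → Submodule K V → Prop))).has_min
      {N | ∃ J : Finset (List σ), N = ⨅ j ∈ J, S j} ⟨⊤, ∅, by simp⟩
  obtain ⟨J0, rfl⟩ := hm
  have hle : ∀ i, (⨅ j ∈ J0, S j) ≤ S i := by
    intro i
    have h1 : (⨅ j ∈ insert i J0, S j) ≤ ⨅ j ∈ J0, S j := by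
      refine le_iInf fun j => le_iInf fun hj => ?_
      exact iInf_le_of_le j (iInf_le_of_le (Finset.mem_insert_of_mem hj) le_rfl)
    have h2 : ¬ (⨅ j ∈ insert i J0, S j) < ⨅ j ∈ J0, S j :=
      hmin _ ⟨insert i J0, rfl⟩
    have heq : (⨅ j ∈ insert i J0, S j) = ⨅ j ∈ J0, S j := by
      by_contra hne
      exact h2 (h1.lt_of_ne hne)
    calc (⨅ j ∈ J0, S j) = ⨅ j ∈ insert i J0, S j := heq.symm
      _ ≤ S i := iInf_le_of_le i (iInf_le_of_le (Finset.mem_insert_self i J0) le_rfl)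
  refine ⟨insert [] J0, ⟨[], Finset.mem_insert_self _ _⟩, fun x => ⟨fun hx i => ?_, ?_⟩⟩
  · have hx0 : x ∈ ⨅ j ∈ J0, S j := by
      rw [Submodule.mem_iInf]
      intro j
      rw [Submodule.mem_iInf]
      intro hj
      exact hx j (Finset.mem_insert_of_mem hj)
    exact hle i hx0
  · intro hx j _
    exact hx j

/-- The homogenized solution submodule for the `Λ` conditions at restriction word `t`. -/
def solL (f : List σ → K) (Q : Finset (List σ → K)) (t : List σ) :
    Submodule K (((Q → K) × (Q → σ → Q → K)) × K) where
  carrier := {x | (∑ q : Q, x.1.1 q * (q : List σ → K) t) = x.2 * f t ∧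
    ∀ (q : Q) (a : σ),
      (∑ p : Q, x.1.2 q a p * (p : List σ → K) t) = x.2 * (q : List σ → K) (a :: t)}
  zero_mem' := by
    constructor
    · simp
    · intro q a; simp
  add_mem' := by
    rintro x y ⟨hx1, hx2⟩ ⟨hy1, hy2⟩
    constructor
    · simp only [Prod.fst_add, Prod.snd_add, Pi.add_apply, add_mul, Finset.sum_add_distrib,
        hx1, hy1]
    · intro q a
      simp only [Prod.fst_add, Prod.snd_add, Pi.add_apply, add_mul, Finset.sum_add_distrib,
        hx2 q a, hy2 q a]
  smul_mem' := by
    rintro c x ⟨hx1, hx2⟩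
    constructor
    · simp only [Prod.smul_fst, Prod.smul_snd, Pi.smul_apply, smul_eq_mul, mul_assoc,
        ← Finset.mul_sum, hx1]
    · intro q a
      simp only [Prod.smul_fst, Prod.smul_snd, Pi.smul_apply, smul_eq_mul, mul_assoc,
        ← Finset.mul_sum, hx2 q a]

lemma mem_lambda_iff (f : List σ → K) (Q : Finset (List σ → K)) (T : Set (List σ))
    (lam : (Q → K) × (Q → σ → Q → K)) :
    lam ∈ Lambda f Q T ↔ ∀ t ∈ T, ((lam.1, lam.2), (1 : K)) ∈ solL f Q t := by
  constructor
  · rintro ⟨h1, h2⟩ t ht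
    exact ⟨by rw [← h1 t ht, one_mul], fun q a => by rw [← h2 q a t ht, one_mul]⟩
  · intro h
    refine ⟨fun t ht => ?_, fun q a t ht => ?_⟩
    · rw [(h t ht).1, one_mul]
    · rw [(h t ht).2 q a, one_mul]

/-- The homogenized solution submodule for the `Γ` conditions at restriction word `u`. -/
def solG (f : List σ → K) (T : Finset (List σ → K)) (u : List σ) :
    Submodule K (((T → K) × (T → σ → T → K)) × K) where
  carrier := {x | (∑ t : T, (t : List σ → K) u * x.1.1 t) = x.2 * f u ∧
    ∀ (t : T) (a : σ),
      (∑ s : T, (s : List σ → K) u * x.1.2 s a t) = x.2 * (t : List σ → K) (u ++ [a])}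
  zero_mem' := by
    constructor
    · simp
    · intro t a; simp
  add_mem' := by
    rintro x y ⟨hx1, hx2⟩ ⟨hy1, hy2⟩
    constructor
    · simp only [Prod.fst_add, Prod.snd_add, Pi.add_apply, mul_add, add_mul,
        Finset.sum_add_distrib, hx1, hy1]
    · intro t a
      simp only [Prod.fst_add, Prod.snd_add, Pi.add_apply, mul_add, add_mul,
        Finset.sum_add_distrib, hx2 t a, hy2 t a]
  smul_mem' := by
    rintro c x ⟨hx1, hx2⟩
    constructor
    · simp only [Prod.smul_fst, Prod.smul_snd, Pi.smul_apply, smul_eq_mul, mul_left_comm,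
        ← Finset.mul_sum, hx1, mul_assoc]
    · intro t a
      simp only [Prod.smul_fst, Prod.smul_snd, Pi.smul_apply, smul_eq_mul, mul_left_comm,
        ← Finset.mul_sum, hx2 t a, mul_assoc]

lemma mem_gamma_iff (f : List σ → K) (T : Finset (List σ → K)) (Q : Set (List σ))
    (gam : (T → K) × (T → σ → T → K)) :
    gam ∈ Gamma f T Q ↔ ∀ u ∈ Q, ((gam.1, gam.2), (1 : K)) ∈ solG f T u := by
  constructor
  · rintro ⟨h1, h2⟩ u hu
    exact ⟨by rw [← h1 u hu, one_mul], fun t a => by rw [← h2 t a u hu, one_mul]⟩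
  · intro h
    refine ⟨fun u hu => ?_, fun t a u hu => ?_⟩
    · rw [(h u hu).1, one_mul]
    · rw [(h u hu).2 t a, one_mul]

lemma strong_lambda (f : List σ → K) (Q : Finset (List σ → K)) :
    ∃ T : Finset (List σ), T.Nonempty ∧ Lambda f Q ↑T = Lambda f Q Set.univ := by
  obtain ⟨J, hJne, hJ⟩ := exists_finset_iInf (((Q → K) × (Q → σ → Q → K)) × K) (solL f Q)
  refine ⟨J, hJne, Set.ext fun lam => ?_⟩
  rw [mem_lambda_iff, mem_lambda_iff]
  constructor
  · intro h t _
    exact (hJ _).1 (fun j hj => h j hj) t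
  · intro h t _
    exact h t trivial

lemma strong_gamma (f : List σ → K) (T : Finset (List σ → K)) :
    ∃ Q : Finset (List σ), Q.Nonempty ∧ Gamma f T ↑Q = Gamma f T Set.univ := by
  obtain ⟨J, hJne, hJ⟩ := exists_finset_iInf (((T → K) × (T → σ → T → K)) × K) (solG f T)
  refine ⟨J, hJne, Set.ext fun gam => ?_⟩
  rw [mem_gamma_iff, mem_gamma_iff]
  constructor
  · intro h u _
    exact (hJ _).1 (fun j hj => h j hj) u
  · intro h u _
    exact h u trivial

/-- Generic extraction of a finite spanning set of words. -/
lemma exists_words_span (g : List σ → List σ → K) (s : Set (List σ → K)) (hs : s.Finite)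
    (hmem : ∀ v, g v ∈ Submodule.span K s) :
    ∃ W : Finset (List σ), W.Nonempty ∧
      Submodule.span K (↑(W.image g) : Set (List σ → K))
        = Submodule.span K (Set.range g) := by
  haveI : FiniteDimensional K (Submodule.span K s) := FiniteDimensional.span_of_finite K hs
  have hle : Submodule.span K (Set.range g) ≤ Submodule.span K s :=
    Submodule.span_le.2 (by rintro _ ⟨v, rfl⟩; exact hmem v)
  haveI : FiniteDimensional K (Submodule.span K (Set.range g)) :=
    Submodule.finiteDimensional_of_le hle
  have hfg : (Submodule.span K (Set.range g)).FG :=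
    (Submodule.fg_iff_finiteDimensional _).2 inferInstance
  obtain ⟨t, ht⟩ := hfg
  have hx : ∀ x ∈ t, ∃ T : Finset (List σ → K),
      ↑T ⊆ Set.range g ∧ x ∈ Submodule.span K (↑T : Set (List σ → K)) := by
    intro x hxt
    exact Submodule.mem_span_finite_of_mem_span (ht ▸ Submodule.subset_span hxt)
  choose Tx hTx1 hTx2 using hx
  classical
  let U : Finset (List σ → K) := t.attach.biUnion fun x => Tx x x.2
  have hUrange : ∀ y ∈ U, ∃ v, g v = y := by
    intro y hy
    obtain ⟨x, _, hyx⟩ := Finset.mem_biUnion.1 hy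
    exact hTx1 x.1 x.2 hyx
  let sel : (List σ → K) → List σ := fun y =>
    if h : ∃ v, g v = y then h.choose else []
  have hsel : ∀ y ∈ U, g (sel y) = y := by
    intro y hy
    have h := hUrange y hy
    simp only [sel, dif_pos h]
    exact h.choose_spec
  refine ⟨insert [] (U.image sel), ⟨[], Finset.mem_insert_self _ _⟩, le_antisymm ?_ ?_⟩
  · refine Submodule.span_le.2 ?_
    rintro _ hy
    obtain ⟨w, _, rfl⟩ := Finset.mem_image.1 hy
    exact Submodule.subset_span ⟨w, rfl⟩
  · rw [← ht]
    refine Submodule.span_le.2 ?_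
    intro x hxt
    have hsub : (↑(Tx x hxt) : Set (List σ → K)) ⊆
        ↑((insert ([] : List σ) (U.image sel)).image g) := by
      intro y hy
      have hyU : y ∈ U := Finset.mem_biUnion.2 ⟨⟨x, hxt⟩, Finset.mem_attach _ _, hy⟩
      have : g (sel y) = y := hsel y hyU
      refine Finset.mem_coe.2 (Finset.mem_image.2 ⟨sel y, ?_, this⟩)
      exact Finset.mem_insert_of_mem (Finset.mem_image.2 ⟨y, hyU, rfl⟩)
    exact Submodule.span_mono hsub (hTx2 x hxt)

end Aux

section Auto

variable {σ K : Type} [Fintype σ] [Field K]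

lemma run_mem_span (A : WAuto σ K) (v : List σ) (β : A.State → K) :
    (fun w => ∑ q : A.State, β q * A.run (v ++ w) q) ∈
      Submodule.span K (Set.range fun q : A.State => fun w => A.run w q) := by
  induction v generalizing β with
  | nil =>
    have h : (fun w => ∑ q : A.State, β q * A.run ([] ++ w) q)
        = ∑ q : A.State, β q • (fun w => A.run w q) := by
      funext w
      simp [Finset.sum_apply]
    rw [h]
    exact Submodule.sum_mem _ fun q _ =>
      Submodule.smul_mem _ _ (Submodule.subset_span ⟨q, rfl⟩)
  | cons a v ih =>
    have h : (fun w => ∑ q : A.State, β q * A.run ((a :: v) ++ w) q)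
        = fun w => ∑ p : A.State,
            (∑ q : A.State, β q * A.trans a q p) * A.run (v ++ w) p := by
      funext w
      simp only [List.cons_append, WAuto.run, Finset.mul_sum, Finset.sum_mul, mul_assoc]
      exact Finset.sum_comm
    rw [h]
    exact ih _

/-- Forward run values. -/
def fwd (A : WAuto σ K) : (A.State → K) → List σ → A.State → K
  | β, [], p => β p
  | β, a :: w, p => fwd A (fun r => ∑ q : A.State, β q * A.trans a q r) w p

lemma fwd_run (A : WAuto σ K) (w : List σ) (β : A.State → K) (v : List σ) :
    ∑ q : A.State, β q * A.run (w ++ v) q = ∑ p : A.State, fwd A β w p * A.run v p := by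
  induction w generalizing β with
  | nil => simp [fwd]
  | cons a w ih =>
    calc ∑ q : A.State, β q * A.run ((a :: w) ++ v) q
        = ∑ p : A.State, (∑ q : A.State, β q * A.trans a q p) * A.run (w ++ v) p := by
          simp only [List.cons_append, WAuto.run, Finset.mul_sum, Finset.sum_mul, mul_assoc]
          exact Finset.sum_comm
      _ = ∑ p : A.State, fwd A (fun r => ∑ q : A.State, β q * A.trans a q r) w p
            * A.run v p := ih _
      _ = ∑ p : A.State, fwd A β (a :: w) p * A.run v p := by simp [fwd]

lemma row_mem_span {A : WAuto σ K} {f : List σ → K} (hA : A.Computes f) (v : List σ) :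
    row f v ∈ Submodule.span K (Set.range fun q : A.State => fun w => A.run w q) := by
  have h : row f v = fun w => ∑ q : A.State, A.init q * A.run (v ++ w) q := by
    funext w
    exact hA (v ++ w)
  rw [h]
  exact run_mem_span A v A.init

lemma col_mem_span {A : WAuto σ K} {f : List σ → K} (hA : A.Computes f) (v : List σ) :
    col f v ∈ Submodule.span K (Set.range fun p : A.State => fun w => fwd A A.init w p) := by
  have h : col f v = ∑ p : A.State, (A.run v p) • (fun w => fwd A A.init w p) := by
    funext w
    simp only [Finset.sum_apply, Pi.smul_apply, smul_eq_mul]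
    rw [col]
    rw [hA (w ++ v), fwd_run]
    exact Finset.sum_congr rfl fun p _ => mul_comm _ _
  rw [h]
  exact Submodule.sum_mem _ fun p _ =>
    Submodule.smul_mem _ _ (Submodule.subset_span ⟨p, rfl⟩)

lemma lambda_nonempty_of_span (f : List σ → K) (W : Finset (List σ))
    (hspan : Submodule.span K (↑(W.image (row f)) : Set (List σ → K))
      = Submodule.span K (Set.range (row f))) :
    (LambdaW f W Set.univ).Nonempty := by
  have hrow : ∀ v : List σ,
      row f v ∈ Submodule.span K (↑(W.image (row f)) : Set (List σ → K)) := by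
    intro v
    rw [hspan]
    exact Submodule.subset_span ⟨v, rfl⟩
  obtain ⟨c1, hc1⟩ := exists_coeffs (hrow [])
  have h2 : ∀ (q : (W.image (row f) : Finset (List σ → K))) (a : σ),
      ∃ c : (W.image (row f) : Finset (List σ → K)) → K,
        ∀ t, (q : List σ → K) (a :: t)
          = ∑ p : (W.image (row f) : Finset (List σ → K)), c p * (p : List σ → K) t := by
    intro q a
    obtain ⟨w, _, hwq⟩ := Finset.mem_image.1 q.2
    obtain ⟨c, hc⟩ := exists_coeffs (hrow (w ++ [a]))
    refine ⟨c, fun t => ?_⟩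
    rw [← hc t, ← hwq]
    show f (w ++ (a :: t)) = f ((w ++ [a]) ++ t)
    rw [List.append_assoc]
    rfl
  choose c2 hc2 using h2
  exact ⟨(c1, c2), fun t _ => hc1 t, fun q a t _ => hc2 q a t⟩

lemma gamma_nonempty_of_span (f : List σ → K) (W : Finset (List σ))
    (hspan : Submodule.span K (↑(W.image (col f)) : Set (List σ → K))
      = Submodule.span K (Set.range (col f))) :
    (GammaW f W Set.univ).Nonempty := by
  have hcol : ∀ v : List σ,
      col f v ∈ Submodule.span K (↑(W.image (col f)) : Set (List σ → K)) := by
    intro v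
    rw [hspan]
    exact Submodule.subset_span ⟨v, rfl⟩
  obtain ⟨c1, hc1⟩ := exists_coeffs' (hcol [])
  have h2 : ∀ (t : (W.image (col f) : Finset (List σ → K))) (a : σ),
      ∃ c : (W.image (col f) : Finset (List σ → K)) → K,
        ∀ u, (t : List σ → K) (u ++ [a])
          = ∑ s : (W.image (col f) : Finset (List σ → K)), (s : List σ → K) u * c s := by
    intro t a
    obtain ⟨v, _, hvt⟩ := Finset.mem_image.1 t.2
    obtain ⟨c, hc⟩ := exists_coeffs' (hcol (a :: v))
    refine ⟨c, fun u => ?_⟩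
    rw [← hc u, ← hvt]
    show f ((u ++ [a]) ++ v) = f (u ++ (a :: v))
    rw [List.append_assoc]
    rfl
  choose c2 hc2 using h2
  refine ⟨(c1, fun s a t => c2 t a s), fun u _ => ?_, fun t a u _ => hc2 t a u⟩
  have hu : f u = col f [] u := by
    show f u = f (u ++ [])
    rw [List.append_nil]
  rw [hu]
  exact hc1 u

end Auto

end LearnWA

open LearnWA

theorem statement16 {σ K : Type} [Fintype σ] [Field K] (f : List σ → K)
    (h : ∃ A : WAuto σ K, A.Computes f) :
    WeaklyGuessable f ∧ WeaklyCoGuessable f ∧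
      StronglyGuessable f ∧ StronglyCoGuessable f := by
  classical
  obtain ⟨A, hA⟩ := h
  -- finite spanning sets of words for rows and columns
  obtain ⟨WR, hWRne, hWR⟩ := exists_words_span (row f)
    (Set.range fun q : A.State => fun w => A.run w q) (Set.finite_range _)
    (row_mem_span hA)
  obtain ⟨WC, hWCne, hWC⟩ := exists_words_span (col f)
    (Set.range fun p : A.State => fun w => fwd A A.init w p) (Set.finite_range _)
    (col_mem_span hA)
  have hLam : (LambdaW f WR Set.univ).Nonempty := lambda_nonempty_of_span f WR hWR
  have hGam : (GammaW f WC Set.univ).Nonempty := gamma_nonempty_of_span f WC hWC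
  have hQRne : (WR.image (row f)).Nonempty := hWRne.image _
  have hQCne : (WC.image (col f)).Nonempty := hWCne.image _
  refine ⟨⟨WR.image (row f), hQRne, ?_, hLam⟩, ⟨WC.image (col f), hQCne, ?_, hGam⟩, ?_, ?_⟩
  · intro q hq
    obtain ⟨w, _, hw⟩ := Finset.mem_image.1 hq
    exact ⟨w, hw.symm⟩
  · intro t ht
    obtain ⟨w, _, hw⟩ := Finset.mem_image.1 ht
    exact ⟨w, hw.symm⟩
  · constructor
    · obtain ⟨T, hTne, hT⟩ := strong_lambda f (WR.image (row f))
      exact ⟨WR, T, hWRne, hTne, hT, hLam⟩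
    · intro Q _
      exact strong_lambda f (Q.image (row f))
  · constructor
    · obtain ⟨Q, hQne, hQ⟩ := strong_gamma f (WC.image (col f))
      exact ⟨Q, WC, hQne, hWCne, hQ, hGam⟩
    · intro T _
      exact strong_gamma f (T.image (col f))
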